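/- Every rayless graph (a graph containing no one-way infinite path) has no end. Equivalently: if the inverse limit of the system of component sets (C_X with bonding maps sending each component of G − X' to the component of G − X containing it, over finite X ⊆ X') is nonempty, then G contains a ray. -/

import Mathlib

open SimpleGraph Set

variable {V : Type*}

/-- The set of components of `G - X` (the subgraph of `G` induced on `Xᶜ`). -/
abbrev Comps (G : SimpleGraph V) (X : Set V) := (G.induce Xᶜ).ConnectedComponent

/-- The vertex set (in `V`) of a component of `G - X`. -/
def suppV (G : SimpleGraph V) (X : Set V) (C : Comps G X) : Set V :=
  Subtype.val '' {v | (G.induce Xᶜ).connectedComponentMk v = C}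

/-- The neighbourhood `N(C) ⊆ X` of a component `C` of `G - X`. -/
def nbhd (G : SimpleGraph V) (X : Set V) (C : Comps G X) : Set V :=
  {x ∈ X | ∃ v ∈ suppV G X C, G.Adj x v}

/-- `C_X(Y)`: the components of `G - X` with neighbourhood exactly `Y`. -/
def compsWithNbhd (G : SimpleGraph V) (X Y : Set V) : Set (Comps G X) :=
  {C | nbhd G X C = Y}

/-- A finite vertex set `Y` is critical if `C_Y(Y)` is infinite. -/
def Critical (G : SimpleGraph V) (Y : Set V) : Prop :=
  Y.Finite ∧ (compsWithNbhd G Y Y).Infinite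

/-- The inclusion graph homomorphism `G - X' → G - X`, for `X ⊆ X'`. -/
def inclHom (G : SimpleGraph V) {X X' : Set V} (h : X ⊆ X') :
    (G.induce X'ᶜ) →g (G.induce Xᶜ) where
  toFun v := ⟨v.1, fun hv => v.2 (h hv)⟩
  map_rel' := fun hadj => hadj

/-- `c_{X',X}`: sends each component of `G - X'` to the component of `G - X`
containing it. -/
def compMap (G : SimpleGraph V) {X X' : Set V} (h : X ⊆ X') :
    Comps G X' → Comps G X :=
  SimpleGraph.ConnectedComponent.map (inclHom G h)

/-! ### Auxiliary lemmas -/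

lemma mem_suppV_iff {G : SimpleGraph V} {X : Set V} {C : Comps G X} {v : V} :
    v ∈ suppV G X C ↔ ∃ (hv : v ∈ Xᶜ), (G.induce Xᶜ).connectedComponentMk ⟨v, hv⟩ = C := by
  constructor
  · rintro ⟨⟨w, hw⟩, hmk, rfl⟩; exact ⟨hw, hmk⟩
  · rintro ⟨hv, hmk⟩; exact ⟨⟨v, hv⟩, hmk, rfl⟩

lemma suppV_nonempty {G : SimpleGraph V} {X : Set V} (C : Comps G X) :
    (suppV G X C).Nonempty := by
  obtain ⟨⟨v, hv⟩, hmk⟩ := C.exists_rep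
  exact ⟨v, ⟨v, hv⟩, hmk, rfl⟩

lemma suppV_mono {G : SimpleGraph V} {X X' : Set V} (h : X ⊆ X') {C' : Comps G X'} {v : V}
    (hv : v ∈ suppV G X' C') : v ∈ suppV G X (compMap G h C') := by
  rw [mem_suppV_iff] at hv ⊢
  obtain ⟨hv', hmk⟩ := hv
  refine ⟨fun hx => hv' (h hx), ?_⟩
  rw [← hmk]
  rfl

/-- A walk in `G` avoiding `X` keeps the component of `G - X`. -/
lemma mk_eq_of_walk {G : SimpleGraph V} {X : Set V} {a b : V} (W : G.Walk a b)
    (hW : ∀ v ∈ W.support, v ∈ Xᶜ) (ha : a ∈ Xᶜ) (hb : b ∈ Xᶜ) :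
    (G.induce Xᶜ).connectedComponentMk ⟨a, ha⟩ = (G.induce Xᶜ).connectedComponentMk ⟨b, hb⟩ := by
  induction W with
  | nil => rfl
  | @cons u v w huv p ih =>
    have hv : v ∈ Xᶜ := hW v (by simp [Walk.support_cons, p.start_mem_support])
    have h1 : (G.induce Xᶜ).Adj ⟨u, ha⟩ ⟨v, hv⟩ := huv
    refine (ConnectedComponent.connectedComponentMk_eq_of_adj h1).trans (ih ?_ hv hb)
    intro x hx
    exact hW x (by simp [Walk.support_cons, hx])

/-- The valuation homomorphism from an induced subgraph. -/
def valHom {G : SimpleGraph V} {s : Set V} : (G.induce s) →g G where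
  toFun := Subtype.val
  map_rel' := fun h => h

lemma exists_walk_of_mk_eq {G : SimpleGraph V} {X : Set V} {a b : V}
    (ha : a ∈ Xᶜ) (hb : b ∈ Xᶜ)
    (h : (G.induce Xᶜ).connectedComponentMk ⟨a, ha⟩ = (G.induce Xᶜ).connectedComponentMk ⟨b, hb⟩) :
    ∃ W : G.Walk a b, W.IsPath ∧ ∀ v ∈ W.support, v ∈ Xᶜ := by
  obtain ⟨p⟩ : (G.induce Xᶜ).Reachable ⟨a, ha⟩ ⟨b, hb⟩ := ConnectedComponent.exact h
  classical
  refine ⟨(p.bypass.map valHom : G.Walk a b), ?_, ?_⟩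
  · exact Walk.map_isPath_of_injective Subtype.val_injective p.bypass_isPath
  · intro v hv
    erw [Walk.support_map, List.mem_map] at hv
    obtain ⟨⟨w, hw⟩, _, rfl⟩ := hv
    exact hw

/-- First-entry lemma: a walk from outside `S` into `S` has a first vertex in `S`. -/
lemma first_entry {G : SimpleGraph V} {S : Set V} :
    ∀ {a b : V} (W : G.Walk a b), a ∉ S → b ∈ S →
    ∃ s t, G.Adj s t ∧ t ∈ S ∧ t ∈ W.support ∧
      ∃ W' : G.Walk a s, ∀ v ∈ W'.support, v ∉ S := by
  intro a b W
  induction W with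
  | nil => intro ha hb; exact absurd hb ha
  | @cons u v w huv p ih =>
    intro ha hb
    by_cases hv : v ∈ S
    · exact ⟨u, v, huv, hv, by simp [Walk.support_cons, p.start_mem_support], Walk.nil,
        by simpa using ha⟩
    · obtain ⟨s, t, hst, htS, htsup, W', hW'⟩ := ih hv hb
      refine ⟨s, t, hst, htS, by simp [Walk.support_cons, htsup], Walk.cons huv W', ?_⟩
      intro x hx
      rcases (by simpa [Walk.support_cons] using hx : x = u ∨ x ∈ W'.support) with rfl | hx
      · exact ha
      · exact hW' x hx

/-- The invariant for the ray construction. -/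
def RayInv (G : SimpleGraph V) (f : ∀ X : Finset V, Comps G (X : Set V))
    (X : Finset V) (L : List V) : Prop :=
  (∀ v ∈ L, v ∈ X) ∧ L.Nodup ∧ L.Chain' G.Adj ∧
    ∃ u ∈ suppV G (X : Set V) (f X), ∀ w ∈ L.getLast?, G.Adj w u

lemma ray_base (G : SimpleGraph V) (f : ∀ X : Finset V, Comps G (X : Set V)) :
    RayInv G f ∅ [] := by
  obtain ⟨u, hu⟩ := suppV_nonempty (f ∅)
  exact ⟨by simp, by simp, List.isChain_nil, u, hu, by simp⟩

lemma ray_step (G : SimpleGraph V) (f : ∀ X : Finset V, Comps G (X : Set V))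
    (hf : ∀ (X X' : Finset V) (hXX' : (X : Set V) ⊆ (X' : Set V)),
        compMap G hXX' (f X') = f X)
    (X : Finset V) (L : List V) (h : RayInv G f X L) :
    ∃ X' L', RayInv G f X' L' ∧ L <+: L' ∧ L.length < L'.length := by
  classical
  obtain ⟨hLX, hnd, hch, u, huS, hadj⟩ := h
  rw [mem_suppV_iff] at huS
  obtain ⟨huX, humk⟩ := huS
  -- enlarge by u, get y in the new component
  set X₁ : Finset V := insert u X with hX1
  have hXX₁ : (X : Set V) ⊆ (X₁ : Set V) := by
    simp only [hX1, Finset.coe_insert]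
    exact Set.subset_insert u (X : Set V)
  obtain ⟨y, hyS⟩ := suppV_nonempty (f X₁)
  have hyX1 : y ∈ ((X₁ : Set V))ᶜ := (mem_suppV_iff.mp hyS).1
  have hy : y ∈ suppV G (X : Set V) (f X) := by
    rw [← hf X X₁ hXX₁]; exact suppV_mono hXX₁ hyS
  rw [mem_suppV_iff] at hy
  obtain ⟨hyX, hymk⟩ := hy
  -- path p from u to y avoiding X
  obtain ⟨p, hp, hpX⟩ := exists_walk_of_mk_eq huX hyX (humk.trans hymk.symm)
  -- enlarge by the support of p
  set X' : Finset V := X ∪ p.support.toFinset with hX'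
  have hXX' : (X : Set V) ⊆ (X' : Set V) := by
    simp only [hX', Finset.coe_union]
    exact Set.subset_union_left
  obtain ⟨z, hzS⟩ := suppV_nonempty (f X')
  have hzX' : z ∈ ((X' : Set V))ᶜ := (mem_suppV_iff.mp hzS).1
  have hzmk' := (mem_suppV_iff.mp hzS).2
  have hz : z ∈ suppV G (X : Set V) (f X) := by
    rw [← hf X X' hXX']; exact suppV_mono hXX' hzS
  rw [mem_suppV_iff] at hz
  obtain ⟨hzX, hzmk⟩ := hz
  -- walk from z to u avoiding X
  obtain ⟨W, _, hWX⟩ := exists_walk_of_mk_eq hzX huX (hzmk.trans humk.symm)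
  have huX' : u ∈ (X' : Set V) := by
    simp only [hX', Finset.coe_union, Set.mem_union]
    right
    simp [List.mem_toFinset, p.start_mem_support]
  -- first entry of W into X'
  obtain ⟨s, t, hst, htX', htW, W', hW'avoid⟩ := first_entry W hzX' huX'
  have hsX' : s ∉ (X' : Set V) := hW'avoid s W'.end_mem_support
  have hsS : s ∈ suppV G (X' : Set V) (f X') := by
    rw [mem_suppV_iff]
    refine ⟨hsX', ?_⟩
    rw [← hzmk']
    exact (mk_eq_of_walk W' (fun v hv => hW'avoid v hv) hzX' hsX').symm
  have htX : t ∉ (X : Set V) := hWX t htW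
  have htp : t ∈ p.support := by
    rcases (by simpa [hX'] using htX' : t ∈ X ∨ t ∈ p.support) with h' | h'
    · exact absurd (Finset.mem_coe.mpr h') htX
    · exact h'
  set q := p.takeUntil t htp with hq
  have hqsub : q.support ⊆ p.support := p.support_takeUntil_subset htp
  have hqX : ∀ v ∈ q.support, v ∉ (X : Set V) := fun v hv => hpX v (hqsub hv)
  refine ⟨X', L ++ q.support, ⟨?_, ?_, ?_, ?_⟩, List.prefix_append _ _, ?_⟩
  · -- all vertices in X'
    intro v hv
    rcases List.mem_append.mp hv with hv | hv
    · exact Finset.mem_coe.mp (hXX' (hLX v hv))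
    · simp only [hX', Finset.mem_union, List.mem_toFinset]
      exact Or.inr (hqsub hv)
  · -- nodup
    refine List.Nodup.append hnd (hp.takeUntil htp).support_nodup ?_
    intro v hvL hvq
    exact hqX v hvq (hLX v hvL)
  · -- chain'
    refine List.IsChain.append hch q.isChain_adj_support ?_
    intro x hx y' hy'
    have huy : u = y' := by
      have h2 := q.support_eq_cons
      rw [h2] at hy'
      have h3 : q.support.head? = some u := by rw [h2]; rfl
      exact Option.some_injective _ (h3.symm.trans (by simpa using hy'))
    rw [← huy]
    exact hadj x hx
  · -- endpoint condition
    refine ⟨s, hsS, ?_⟩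
    intro w hw
    have hqn : q.support ≠ [] := q.support_ne_nil
    rw [List.getLast?_append_of_ne_nil _ hqn] at hw
    have hwt : w = t := by
      rw [List.getLast?_eq_getLast hqn] at hw
      simp only [Option.mem_def, Option.some.injEq] at hw
      rw [← hw]
      exact q.getLast_support
    rw [hwt]
    exact hst.symm
  · -- length increases
    have : q.support ≠ [] := q.support_ne_nil
    simp only [List.length_append]
    have : 0 < q.support.length := List.length_pos_iff.mpr this
    omega

/-- If the inverse limit of the component system (a direction of `G`)
is nonempty, then `G` contains a ray. Equivalently, rayless graphs have no end. -/
theorem stmt6 (G : SimpleGraph V)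
    (h : ∃ f : ∀ X : Finset V, Comps G (X : Set V),
      ∀ (X X' : Finset V) (hXX' : (X : Set V) ⊆ (X' : Set V)),
        compMap G hXX' (f X') = f X) :
    ∃ r : ℕ → V, Function.Injective r ∧ ∀ n, G.Adj (r n) (r (n + 1)) := by
  classical
  obtain ⟨f, hf⟩ := h
  obtain ⟨v₀, _⟩ := suppV_nonempty (f ∅)
  have stepT : ∀ s : {p : Finset V × List V // RayInv G f p.1 p.2},
      ∃ s' : {p : Finset V × List V // RayInv G f p.1 p.2},
        s.1.2 <+: s'.1.2 ∧ s.1.2.length < s'.1.2.length := by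
    rintro ⟨⟨X, L⟩, hI⟩
    obtain ⟨X', L', hI', hpre, hlen⟩ := ray_step G f hf X L hI
    exact ⟨⟨(X', L'), hI'⟩, hpre, hlen⟩
  choose next hpre hlen using stepT
  let g : ℕ → {p : Finset V × List V // RayInv G f p.1 p.2} :=
    fun n => Nat.rec ⟨(∅, []), ray_base G f⟩ (fun _ s => next s) n
  have hg : ∀ n, g (n + 1) = next (g n) := fun n => rfl
  have hpre' : ∀ m n, m ≤ n → (g m).1.2 <+: (g n).1.2 := by
    intro m n hmn
    induction n, hmn using Nat.le_induction with
    | base => exact List.prefix_refl _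
    | succ n hmn ih => exact ih.trans (by rw [hg]; exact hpre (g n))
  have hlen' : ∀ n, n ≤ ((g n).1.2).length := by
    intro n
    induction n with
    | zero => simp
    | succ n ih =>
      have := hlen (g n)
      rw [← hg] at this
      omega
  -- the ray
  refine ⟨fun n => ((g (n + 1)).1.2).getD n v₀, ?_, ?_⟩
  · -- injective
    have key : ∀ a b : ℕ, a < b →
        ((g (a + 1)).1.2).getD a v₀ ≠ ((g (b + 1)).1.2).getD b v₀ := by
      intro a b hab
      have hla : a < ((g (b + 1)).1.2).length := lt_of_lt_of_le (by omega) (hlen' (b + 1))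
      have hlb : b < ((g (b + 1)).1.2).length := lt_of_lt_of_le (by omega) (hlen' (b + 1))
      have hpa : ((g (a + 1)).1.2).getD a v₀ = ((g (b + 1)).1.2).getD a v₀ := by
        have hpp := hpre' (a + 1) (b + 1) (by omega)
        have ha' : a < ((g (a + 1)).1.2).length := lt_of_lt_of_le (by omega) (hlen' (a + 1))
        rw [List.getD_eq_getElem _ _ ha', List.getD_eq_getElem _ _ hla]
        exact hpp.getElem ha'
      rw [hpa, List.getD_eq_getElem _ _ hla, List.getD_eq_getElem _ _ hlb]
      have hnd : ((g (b + 1)).1.2).Nodup := (g (b + 1)).2.2.1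
      intro hcon
      have := (hnd.getElem_inj_iff).mp hcon
      omega
    intro a b hab
    rcases lt_trichotomy a b with hlt | heq | hgt
    · exact absurd hab (key a b hlt)
    · exact heq
    · exact absurd hab.symm (key b a hgt)
  · -- adjacency
    intro n
    simp only []
    show G.Adj (((g (n + 1)).1.2).getD n v₀) (((g (n + 2)).1.2).getD (n + 1) v₀)
    have h1 : ((g (n + 1)).1.2).getD n v₀ = ((g (n + 2)).1.2).getD n v₀ := by
      have hpp := hpre' (n + 1) (n + 2) (by omega)
      have ha' : n < ((g (n + 1)).1.2).length := lt_of_lt_of_le (by omega) (hlen' (n + 1))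
      have hla : n < ((g (n + 2)).1.2).length := lt_of_lt_of_le (by omega) (hlen' (n + 2))
      rw [List.getD_eq_getElem _ _ ha', List.getD_eq_getElem _ _ hla]
      exact hpp.getElem ha'
    rw [h1]
    have hch : ((g (n + 2)).1.2).Chain' G.Adj := (g (n + 2)).2.2.2.1
    have hla : n < ((g (n + 2)).1.2).length := lt_of_lt_of_le (by omega) (hlen' (n + 2))
    have hlb : n + 1 < ((g (n + 2)).1.2).length := lt_of_lt_of_le (by omega) (hlen' (n + 2))
    rw [List.getD_eq_getElem _ _ hla, List.getD_eq_getElem _ _ hlb]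
    have := List.isChain_iff_getElem.mp hch n (by omega)
    simpa [List.get_eq_getElem] using this
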